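/- Let 𝒫 be a finite set of properties, X ⊆ ℝⁿ a conically closed set (for all e, f ∈ X and all α, β ≥ 0, αe + βf ∈ X), and for each p ∈ 𝒫 let γ_p : ℝⁿ → ℝ be a scoring function. Suppose the strict epistemic pooling principle holds for summation pooling for all e, f ∈ X (for every p ∈ 𝒫, γ_p(e + f) > 0 ↔ γ_p(e) > 0 ∨ γ_p(f) > 0), and suppose every epistemic state is realized: for every subset Q ⊆ 𝒫 there exists e ∈ X with Γ(e) = Q, where Γ(e) = {p ∈ 𝒫 : γ_p(e) > 0}. Then n ≥ |𝒫|. -/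

import Mathlib

/-- If the strict epistemic pooling principle holds for summation pooling
on a conically closed set X ⊆ ℝⁿ for a finite set of properties 𝒫, and every
epistemic state Q ⊆ 𝒫 is realized by some embedding in X, then n ≥ |𝒫|. -/
theorem sum_pooling_dimension_bound (n : ℕ) (P : Type*) [Fintype P]
    (X : Set (Fin n → ℝ))
    (hX : ∀ e ∈ X, ∀ f ∈ X, ∀ α β : ℝ, 0 ≤ α → 0 ≤ β → α • e + β • f ∈ X)
    (γ : P → (Fin n → ℝ) → ℝ)
    (hpool : ∀ e ∈ X, ∀ f ∈ X, ∀ p : P,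
      γ p (e + f) > 0 ↔ (γ p e > 0 ∨ γ p f > 0))
    (hreal : ∀ Q : Set P, ∃ e ∈ X, ∀ p : P, γ p e > 0 ↔ p ∈ Q) :
    Fintype.card P ≤ n := by
  classical
  obtain ⟨e0, he0X, he0⟩ := hreal ∅
  have h0X : (0 : Fin n → ℝ) ∈ X := by
    have := hX e0 he0X e0 he0X 0 0 le_rfl le_rfl
    simpa using this
  have hγ0 : ∀ p, ¬ γ p (0 : Fin n → ℝ) > 0 := by
    intro p hp
    have h : γ p (e0 + 0) > 0 := (hpool e0 he0X 0 h0X p).mpr (Or.inr hp)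
    rw [add_zero] at h
    exact absurd ((he0 p).mp h) (Set.notMem_empty p)
  have hsmul : ∀ e ∈ X, ∀ α : ℝ, 0 ≤ α → α • e ∈ X := by
    intro e he α hα
    have := hX e he e he α 0 hα le_rfl
    simpa using this
  -- natural multiples preserve the epistemic state
  have hnat : ∀ e ∈ X, ∀ k : ℕ, 1 ≤ k → ∀ p, (γ p ((k : ℝ) • e) > 0 ↔ γ p e > 0) := by
    intro e he k hk
    induction k, hk using Nat.le_induction with
    | base => intro p; norm_num
    | succ k hk ih =>
      intro p
      have hkX : (k : ℝ) • e ∈ X := hsmul e he _ (by positivity)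
      have hrw : ((k + 1 : ℕ) : ℝ) • e = (k : ℝ) • e + e := by
        push_cast
        rw [add_smul, one_smul]
      rw [hrw, hpool _ hkX e he p]
      constructor
      · rintro (h | h)
        · exact (ih p).mp h
        · exact h
      · intro h; exact Or.inr h
  -- scaling by 0 < α ≤ 1
  have hfrac : ∀ e ∈ X, ∀ α : ℝ, 0 < α → α ≤ 1 → ∀ p, γ p (α • e) > 0 → γ p e > 0 := by
    intro e he α hα hα1 p hp
    have h1 : (1 - α) • e ∈ X := hsmul e he _ (by linarith)
    have h2 : α • e ∈ X := hsmul e he _ hα.le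
    have h : γ p (α • e + (1 - α) • e) > 0 := (hpool _ h2 _ h1 p).mpr (Or.inl hp)
    rwa [show α • e + (1 - α) • e = e by rw [← add_smul]; norm_num] at h
  -- scaling by any positive α, one direction
  have hscale : ∀ e ∈ X, ∀ α : ℝ, 0 < α → ∀ p, γ p (α • e) > 0 → γ p e > 0 := by
    intro e he α hα p hp
    set k := ⌈α⌉₊ with hkdef
    have hk1 : 1 ≤ k := by
      rw [hkdef]
      exact Nat.one_le_ceil_iff.mpr hα
    have hkpos : (0 : ℝ) < k := by exact_mod_cast Nat.lt_of_lt_of_le Nat.zero_lt_one hk1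
    have hαk : α ≤ k := Nat.le_ceil α
    have hrw : α • e = (k : ℝ) • ((α / k) • e) := by
      rw [smul_smul]
      congr 1
      field_simp
    have hfracX : (α / k) • e ∈ X := hsmul e he _ (by positivity)
    rw [hrw] at hp
    have hp' : γ p ((α / k) • e) > 0 := (hnat _ hfracX k hk1 p).mp hp
    exact hfrac e he (α / k) (by positivity) (by rw [div_le_one hkpos]; exact hαk) p hp'
  -- positive scaling preserves the epistemic state
  have heq : ∀ e ∈ X, ∀ α : ℝ, 0 < α → ∀ p, (γ p (α • e) > 0 ↔ γ p e > 0) := by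
    intro e he α hα p
    constructor
    · exact hscale e he α hα p
    · intro hp
      have hαe : α • e ∈ X := hsmul e he α hα.le
      have hrw : (1 / α) • (α • e) = e := by
        rw [smul_smul]
        field_simp
        rw [one_smul]
      apply hscale (α • e) hαe (1 / α) (by positivity) p
      rw [hrw]
      exact hp
  -- positive conic combinations
  have hsum : ∀ (A : Finset P) (c : P → ℝ) (E : P → (Fin n → ℝ)),
      (∀ p ∈ A, 0 < c p) → (∀ p ∈ A, E p ∈ X) →
      ((∑ p ∈ A, c p • E p) ∈ X ∧
        ∀ q, (γ q (∑ p ∈ A, c p • E p) > 0 ↔ ∃ p ∈ A, γ q (E p) > 0)) := by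
    intro A
    induction A using Finset.induction with
    | empty =>
      intro c E _ _
      simp only [Finset.sum_empty]
      exact ⟨h0X, fun q => by simpa using hγ0 q⟩
    | insert _ _ ha ih =>
      rename_i a A
      intro c E hc hE
      have hcA : ∀ p ∈ A, 0 < c p := fun p hp => hc p (Finset.mem_insert_of_mem hp)
      have hEA : ∀ p ∈ A, E p ∈ X := fun p hp => hE p (Finset.mem_insert_of_mem hp)
      obtain ⟨hXA, hγA⟩ := ih c E hcA hEA
      have haX : E a ∈ X := hE a (Finset.mem_insert_self a A)
      have hca : 0 < c a := hc a (Finset.mem_insert_self a A)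
      have haXs : c a • E a ∈ X := hsmul _ haX _ hca.le
      have hsum_rw : ∑ p ∈ insert a A, c p • E p = c a • E a + ∑ p ∈ A, c p • E p :=
        Finset.sum_insert ha
      constructor
      · rw [hsum_rw]
        have := hX _ haXs _ hXA 1 1 zero_le_one zero_le_one
        simpa using this
      · intro q
        rw [hsum_rw, hpool _ haXs _ hXA q]
        constructor
        · rintro (h | h)
          · exact ⟨a, Finset.mem_insert_self a A, (heq _ haX _ hca q).mp h⟩
          · obtain ⟨p, hp, hγp⟩ := (hγA q).mp h
            exact ⟨p, Finset.mem_insert_of_mem hp, hγp⟩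
        · rintro ⟨p, hp, hγp⟩
          rcases Finset.mem_insert.mp hp with rfl | hp'
          · exact Or.inl ((heq _ haX _ hca q).mpr hγp)
          · exact Or.inr ((hγA q).mpr ⟨p, hp', hγp⟩)
  -- realizers of singleton states
  choose E hEX hE using fun p : P => hreal ({p} : Set P)
  have hEq : ∀ p q : P, γ q (E p) > 0 ↔ q = p := by
    intro p q
    rw [hE p q, Set.mem_singleton_iff]
  -- linear independence
  have hli : LinearIndependent ℝ E := by
    rw [Fintype.linearIndependent_iff]
    intro c hc
    by_contra hne
    push_neg at hne
    obtain ⟨q, hq⟩ := hne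
    set A := Finset.univ.filter (fun p => 0 < c p) with hAdef
    set B := Finset.univ.filter (fun p => c p < 0) with hBdef
    have hAB : Disjoint A B := by
      rw [Finset.disjoint_left]
      intro p hpA hpB
      rw [hAdef, Finset.mem_filter] at hpA
      rw [hBdef, Finset.mem_filter] at hpB
      linarith [hpA.2, hpB.2]
    have hunion : ∑ p ∈ A, c p • E p + ∑ p ∈ B, c p • E p = 0 := by
      rw [← Finset.sum_union hAB, ← hc]
      apply Finset.sum_subset (Finset.subset_univ _)
      intro p _ hp
      rw [Finset.mem_union, hAdef, hBdef, Finset.mem_filter, Finset.mem_filter] at hp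
      push_neg at hp
      have h1 := hp.1 (Finset.mem_univ p)
      have h2 := hp.2 (Finset.mem_univ p)
      have : c p = 0 := le_antisymm h1 h2
      rw [this, zero_smul]
    have huv : ∑ p ∈ A, c p • E p = ∑ p ∈ B, (-c p) • E p := by
      have : ∑ p ∈ B, (-c p) • E p = -∑ p ∈ B, c p • E p := by
        rw [← Finset.sum_neg_distrib]
        congr 1
        ext p
        rw [neg_smul]
      rw [this]
      linear_combination (norm := module) hunion
    have hcApos : ∀ p ∈ A, 0 < c p := by
      intro p hp; rw [hAdef, Finset.mem_filter] at hp; exact hp.2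
    have hcBpos : ∀ p ∈ B, 0 < -c p := by
      intro p hp; rw [hBdef, Finset.mem_filter] at hp; linarith [hp.2]
    have hEXA : ∀ p ∈ A, E p ∈ X := fun p _ => hEX p
    have hEXB : ∀ p ∈ B, E p ∈ X := fun p _ => hEX p
    obtain ⟨_, hγA⟩ := hsum A c E hcApos hEXA
    obtain ⟨_, hγB⟩ := hsum B (fun p => -c p) E hcBpos hEXB
    rcases lt_or_gt_of_ne hq with hneg | hpos
    · -- c q < 0 : q ∈ B
      have hqB : q ∈ B := by rw [hBdef, Finset.mem_filter]; exact ⟨Finset.mem_univ q, hneg⟩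
      have h1 : γ q (∑ p ∈ B, (-c p) • E p) > 0 :=
        (hγB q).mpr ⟨q, hqB, (hEq q q).mpr rfl⟩
      rw [← huv] at h1
      obtain ⟨p, hpA, hγp⟩ := (hγA q).mp h1
      have : q = p := (hEq p q).mp hγp
      subst this
      rw [hAdef, Finset.mem_filter] at hpA
      linarith [hpA.2]
    · -- c q > 0 : q ∈ A
      have hqA : q ∈ A := by rw [hAdef, Finset.mem_filter]; exact ⟨Finset.mem_univ q, hpos⟩
      have h1 : γ q (∑ p ∈ A, c p • E p) > 0 :=
        (hγA q).mpr ⟨q, hqA, (hEq q q).mpr rfl⟩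
      rw [huv] at h1
      obtain ⟨p, hpB, hγp⟩ := (hγB q).mp h1
      have : q = p := (hEq p q).mp hγp
      subst this
      rw [hBdef, Finset.mem_filter] at hpB
      linarith [hpB.2]
  calc Fintype.card P ≤ Module.finrank ℝ (Fin n → ℝ) := hli.fintype_card_le_finrank
    _ = n := Module.finrank_fin_fun ℝ
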